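/- The ring 𝒮 is a normal integral domain: 𝒮 is a domain and it is integrally closed in its field of fractions. -/

import Mathlib

open MvPolynomial

/-- The ring `𝒮`: the `F`-subalgebra of `F[x,y,z]` generated by the six monomials
`x, xz, xz², y, yz, yz²` (the variables `x, y, z` are indexed by `0, 1, 2`). -/
noncomputable def toricS (F : Type*) [CommRing F] : Subalgebra F (MvPolynomial (Fin 3) F) :=
  Algebra.adjoin F {X 0, X 0 * X 2, X 0 * X 2 ^ 2, X 1, X 1 * X 2, X 1 * X 2 ^ 2}

namespace ToricAux

open LaurentPolynomial

variable {F : Type*} [CommRing F]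

noncomputable def fs3 (a b c : ℕ) : Fin 3 →₀ ℕ :=
  Finsupp.single 0 a + Finsupp.single 1 b + Finsupp.single 2 c

@[simp] lemma fs3_apply0 (a b c : ℕ) : fs3 a b c 0 = a := by
  simp [fs3, Finsupp.single_apply]
@[simp] lemma fs3_apply1 (a b c : ℕ) : fs3 a b c 1 = b := by
  simp [fs3, Finsupp.single_apply]
@[simp] lemma fs3_apply2 (a b c : ℕ) : fs3 a b c 2 = c := by
  simp [fs3, Finsupp.single_apply]

lemma fs3_add (a b c a' b' c' : ℕ) :
    fs3 a b c + fs3 a' b' c' = fs3 (a + a') (b + b') (c + c') := by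
  simp only [fs3, Finsupp.single_add]
  abel

lemma eq_fs3 (d : Fin 3 →₀ ℕ) : d = fs3 (d 0) (d 1) (d 2) := by
  ext i
  fin_cases i <;> simp

lemma fs3_zero : fs3 0 0 0 = 0 := by simp [fs3]

lemma X0_mul_X2_pow (e : ℕ) :
    (X 0 * X 2 ^ e : MvPolynomial (Fin 3) F) = monomial (fs3 1 0 e) 1 := by
  rw [X_pow_eq_monomial, X, monomial_mul]
  simp [fs3, Finsupp.single_zero]

lemma X1_mul_X2_pow (e : ℕ) :
    (X 1 * X 2 ^ e : MvPolynomial (Fin 3) F) = monomial (fs3 0 1 e) 1 := by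
  rw [X_pow_eq_monomial, X, monomial_mul]
  simp [fs3, Finsupp.single_zero]

lemma gen0_mem (e : ℕ) (he : e ≤ 2) :
    (X 0 * X 2 ^ e : MvPolynomial (Fin 3) F) ∈ toricS F := by
  interval_cases e <;>
    [ (rw [pow_zero, mul_one]);  skip; skip] <;>
    refine Algebra.subset_adjoin ?_ <;> simp [pow_one]

lemma gen1_mem (e : ℕ) (he : e ≤ 2) :
    (X 1 * X 2 ^ e : MvPolynomial (Fin 3) F) ∈ toricS F := by
  interval_cases e <;>
    [ (rw [pow_zero, mul_one]);  skip; skip] <;>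
    refine Algebra.subset_adjoin ?_ <;> simp [pow_one]

lemma monomial_fs3_mem :
    ∀ (n a b c : ℕ), a + b = n → c ≤ 2 * (a + b) → ∀ k : F,
      monomial (fs3 a b c) k ∈ toricS F := by
  intro n
  induction n with
  | zero =>
    intro a b c hab hc k
    obtain ⟨rfl, rfl⟩ : a = 0 ∧ b = 0 := by omega
    obtain rfl : c = 0 := by omega
    rw [fs3_zero, monomial_zero', ← algebraMap_eq]
    exact Subalgebra.algebraMap_mem _ k
  | succ n ih =>
    intro a b c hab hc k
    obtain ⟨e, he1, he2, he3⟩ : ∃ e, e ≤ 2 ∧ e ≤ c ∧ (e = c ∨ e = 2) := by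
      rcases le_or_gt c 2 with h | h
      · exact ⟨c, h, le_rfl, Or.inl rfl⟩
      · exact ⟨2, le_rfl, by omega, Or.inr rfl⟩
    have hbound : ∀ m : ℕ, c ≤ 2 * m + 2 → c - e ≤ 2 * m := by
      intro m hm
      rcases he3 with h | h <;> omega
    rcases Nat.eq_zero_or_pos a with rfl | ha
    · -- use X 1 * X 2 ^ e
      obtain ⟨b', rfl⟩ : ∃ b', b = b' + 1 := ⟨n, by omega⟩
      have key : monomial (fs3 0 (b' + 1) c) k
          = (X 1 * X 2 ^ e : MvPolynomial (Fin 3) F) * monomial (fs3 0 b' (c - e)) k := by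
        rw [X1_mul_X2_pow, monomial_mul, fs3_add, one_mul,
          show 0 + 0 = 0 from rfl, show 1 + b' = b' + 1 from by omega,
          show e + (c - e) = c from by omega]
      rw [key]
      exact mul_mem (gen1_mem e he1)
        (ih 0 b' (c - e) (by omega) (by simpa using hbound b' (by omega)) k)
    · obtain ⟨a', rfl⟩ : ∃ a', a = a' + 1 := ⟨a - 1, by omega⟩
      have key : monomial (fs3 (a' + 1) b c) k
          = (X 0 * X 2 ^ e : MvPolynomial (Fin 3) F) * monomial (fs3 a' b (c - e)) k := by
        rw [X0_mul_X2_pow, monomial_mul, fs3_add, one_mul,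
          show 1 + a' = a' + 1 from by omega, show 0 + b = b from Nat.zero_add b,
          show e + (c - e) = c from by omega]
      rw [key]
      exact mul_mem (gen0_mem e he1)
        (ih a' b (c - e) (by omega) (hbound (a' + b) (by omega)) k)

lemma monomial_mem (d : Fin 3 →₀ ℕ) (h : d 2 ≤ 2 * (d 0 + d 1)) (k : F) :
    monomial d k ∈ toricS F := by
  rw [eq_fs3 d]
  exact monomial_fs3_mem (d 0 + d 1) _ _ _ rfl h k

/-- weight of an exponent vector -/
def w (d : Fin 3 →₀ ℕ) : ℤ := 2 * (d 0 : ℤ) + 2 * (d 1 : ℤ) - (d 2 : ℤ)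

noncomputable def φ : MvPolynomial (Fin 3) F →ₐ[F] MvPolynomial (Fin 3) (LaurentPolynomial F) :=
  aeval ![MvPolynomial.C (T 2) * X 0, MvPolynomial.C (T 2) * X 1,
    MvPolynomial.C (T (-1)) * X 2]

lemma phi_monomial (d : Fin 3 →₀ ℕ) (k : F) :
    φ (monomial d k) = monomial d (LaurentPolynomial.C k * T (w d)) := by
  rw [φ, aeval_monomial, monomial_eq, Finsupp.prod_fintype _ _ (fun i => pow_zero _),
    Finsupp.prod_fintype _ _ (fun i => pow_zero _), Fin.prod_univ_three, Fin.prod_univ_three]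
  simp only [Matrix.cons_val_zero, Matrix.cons_val_one, Matrix.head_cons, Matrix.cons_val_two,
    Matrix.tail_cons]
  rw [show (algebraMap F (MvPolynomial (Fin 3) (LaurentPolynomial F))) k
      = MvPolynomial.C (LaurentPolynomial.C k) from rfl]
  rw [mul_pow, mul_pow, mul_pow, ← MvPolynomial.C_pow, ← MvPolynomial.C_pow,
    ← MvPolynomial.C_pow, T_pow, T_pow, T_pow]
  have hT : (T (w d) : LaurentPolynomial F)
      = T ((d 0 : ℤ) * 2) * T ((d 1 : ℤ) * 2) * T ((d 2 : ℤ) * (-1)) := by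
    rw [← T_add, ← T_add]
    congr 1
    rw [w]; ring
  rw [hT]
  simp only [MvPolynomial.C_mul]
  ring

lemma coeff_phi (p : MvPolynomial (Fin 3) F) (d : Fin 3 →₀ ℕ) :
    MvPolynomial.coeff d (φ p) = LaurentPolynomial.C (coeff d p) * T (w d) := by
  conv_lhs => rw [p.as_sum, map_sum]
  simp only [phi_monomial]
  rw [MvPolynomial.coeff_sum]
  simp only [coeff_monomial]
  rw [Finset.sum_ite_eq' p.support d]
  by_cases h : d ∈ p.support
  · simp [h]
  · simp [h, notMem_support_iff.mp h]

lemma T_nonneg_of_toLaurent (k : F) (n : ℤ) (q : Polynomial F) (hk : k ≠ 0)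
    (h : Polynomial.toLaurent q = LaurentPolynomial.C k * T n) : 0 ≤ n := by
  by_contra hn
  push_neg at hn
  set m : ℕ := (-n).toNat with hm
  have hmn : (m : ℤ) = -n := Int.toNat_of_nonneg (by omega)
  have : Polynomial.toLaurent (q * Polynomial.X ^ m) = Polynomial.toLaurent (Polynomial.C k) := by
    rw [map_mul, Polynomial.toLaurent_X_pow, h, Polynomial.toLaurent_C, mul_assoc, ← T_add]
    rw [hmn, add_neg_cancel, T_zero, mul_one]
  have h2 : q * Polynomial.X ^ m = Polynomial.C k := Polynomial.toLaurent_injective this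
  have h3 : (q * Polynomial.X ^ m).coeff 0 = k := by rw [h2, Polynomial.coeff_C_zero]
  rw [Polynomial.coeff_mul_X_pow'] at h3
  have hm0 : 0 < m := by omega
  simp [Nat.not_le.mpr hm0] at h3
  exact hk h3.symm

noncomputable def ιalg : MvPolynomial (Fin 3) (Polynomial F) →ₐ[F]
    MvPolynomial (Fin 3) (LaurentPolynomial F) :=
  mapAlgHom Polynomial.toLaurentAlg

lemma ιalg_apply (q : MvPolynomial (Fin 3) (Polynomial F)) :
    ιalg q = MvPolynomial.map (Polynomial.toLaurent (R := F)) q := rfl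

lemma ιalg_injective : Function.Injective (ιalg (F := F)) := by
  intro a b h
  exact MvPolynomial.map_injective _ Polynomial.toLaurent_injective h

lemma CT_mul (m n : ℤ) :
    (MvPolynomial.C (T m) * MvPolynomial.C (T n) :
      MvPolynomial (Fin 3) (LaurentPolynomial F)) = MvPolynomial.C (T (m + n)) := by
  rw [← MvPolynomial.C_mul, ← T_add]

lemma phi_mem_range_of_mem {r : MvPolynomial (Fin 3) F} (hr : r ∈ toricS F) :
    φ r ∈ (ιalg (F := F)).range := by
  have : toricS F ≤ (AlgHom.range (ιalg (F := F))).comap φ := by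
    apply Algebra.adjoin_le
    intro g hg
    simp only [Set.mem_insert_iff, Set.mem_singleton_iff] at hg
    rcases hg with rfl | rfl | rfl | rfl | rfl | rfl
    · exact ⟨MvPolynomial.C (Polynomial.X ^ 2) * X 0, by
        simp [ιalg_apply, φ, MvPolynomial.map_C, Polynomial.toLaurent_X_pow]
        rw [← MvPolynomial.C_pow, T_pow]
        norm_num⟩
    · exact ⟨MvPolynomial.C Polynomial.X * (X 0 * X 2), by
        simp [ιalg_apply, φ, MvPolynomial.map_C, Polynomial.toLaurent_X]
        rw [show (MvPolynomial.C (T 2) * X 0 * (MvPolynomial.C (T (-1)) * X 2) :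
            MvPolynomial (Fin 3) (LaurentPolynomial F))
          = MvPolynomial.C (T 2) * MvPolynomial.C (T (-1)) * (X 0 * X 2) from by ring, CT_mul]
        norm_num⟩
    · exact ⟨X 0 * X 2 ^ 2, by
        simp [ιalg_apply, φ, mul_pow, ← MvPolynomial.C_pow, T_pow]
        rw [show (MvPolynomial.C (T 2) * X 0 * (MvPolynomial.C (T (-2)) * X 2 ^ 2) :
            MvPolynomial (Fin 3) (LaurentPolynomial F))
          = MvPolynomial.C (T 2) * MvPolynomial.C (T (-2)) * (X 0 * X 2 ^ 2) from by ring, CT_mul]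
        norm_num [T_zero]⟩
    · exact ⟨MvPolynomial.C (Polynomial.X ^ 2) * X 1, by
        simp [ιalg_apply, φ, MvPolynomial.map_C, Polynomial.toLaurent_X_pow]
        rw [← MvPolynomial.C_pow, T_pow]
        norm_num⟩
    · exact ⟨MvPolynomial.C Polynomial.X * (X 1 * X 2), by
        simp [ιalg_apply, φ, MvPolynomial.map_C, Polynomial.toLaurent_X]
        rw [show (MvPolynomial.C (T 2) * X 1 * (MvPolynomial.C (T (-1)) * X 2) :
            MvPolynomial (Fin 3) (LaurentPolynomial F))
          = MvPolynomial.C (T 2) * MvPolynomial.C (T (-1)) * (X 1 * X 2) from by ring, CT_mul]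
        norm_num⟩
    · exact ⟨X 1 * X 2 ^ 2, by
        simp [ιalg_apply, φ, mul_pow, ← MvPolynomial.C_pow, T_pow]
        rw [show (MvPolynomial.C (T 2) * X 1 * (MvPolynomial.C (T (-2)) * X 2 ^ 2) :
            MvPolynomial (Fin 3) (LaurentPolynomial F))
          = MvPolynomial.C (T 2) * MvPolynomial.C (T (-2)) * (X 1 * X 2 ^ 2) from by ring, CT_mul]
        norm_num [T_zero]⟩
  exact this hr

lemma mem_of_phi_eq {p : MvPolynomial (Fin 3) F} {q : MvPolynomial (Fin 3) (Polynomial F)}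
    (h : ιalg q = φ p) : p ∈ toricS F := by
  rw [p.as_sum]
  apply Subalgebra.sum_mem
  intro d hd
  apply monomial_mem
  have hco : Polynomial.toLaurent (MvPolynomial.coeff d q)
      = LaurentPolynomial.C (coeff d p) * T (w d) := by
    rw [← coeff_phi, ← h, ιalg_apply, MvPolynomial.coeff_map]
  have hw : 0 ≤ w d :=
    T_nonneg_of_toLaurent _ _ _ (mem_support_iff.mp hd) hco
  rw [w] at hw
  omega

/-- clearing `z`-denominators by multiplying with `(xy)^N` -/
lemma mul_shift_mem (p : MvPolynomial (Fin 3) F) (N : ℕ) (h : p.totalDegree ≤ N) :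
    p * (X 0 * X 1) ^ N ∈ toricS F := by
  have hXN : ((X 0 * X 1 : MvPolynomial (Fin 3) F)) ^ N = monomial (fs3 N N 0) 1 := by
    rw [mul_pow, X_pow_eq_monomial, X_pow_eq_monomial, monomial_mul, one_mul]
    congr 1
    simp [fs3, Finsupp.single_zero]
  rw [p.as_sum, Finset.sum_mul]
  apply Subalgebra.sum_mem
  intro d hd
  rw [hXN, monomial_mul, mul_one]
  apply monomial_mem
  have hd2 : d 2 ≤ p.totalDegree := by
    have h1 : d 2 ≤ d.sum fun _ e => e := by
      by_cases h2 : d 2 = 0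
      · omega
      · rw [Finsupp.sum]
        exact Finset.single_le_sum (fun _ _ => Nat.zero_le _) (Finsupp.mem_support_iff.mpr h2)
    exact le_trans h1 (MvPolynomial.le_totalDegree hd)
  simp only [Finsupp.add_apply, fs3_apply0, fs3_apply1, fs3_apply2]
  omega

/-- clearing `T`-denominators in `B` -/
lemma exists_shift (b : MvPolynomial (Fin 3) (LaurentPolynomial F)) :
    ∃ (n : ℕ) (p : MvPolynomial (Fin 3) (Polynomial F)),
      ιalg p = b * MvPolynomial.C (T (n : ℤ)) := by
  induction b using MvPolynomial.induction_on with
  | C a =>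
    obtain ⟨n, f, hf⟩ := a.exists_T_pow
    exact ⟨n, MvPolynomial.C f, by
      rw [ιalg_apply, MvPolynomial.map_C, hf, MvPolynomial.C_mul]⟩
  | add p q hp hq =>
    obtain ⟨np, fp, hfp⟩ := hp
    obtain ⟨nq, fq, hfq⟩ := hq
    refine ⟨np + nq, fp * MvPolynomial.C (Polynomial.X ^ nq)
      + fq * MvPolynomial.C (Polynomial.X ^ np), ?_⟩
    have hC : ∀ m : ℕ, ιalg (MvPolynomial.C (Polynomial.X ^ m) :
        MvPolynomial (Fin 3) (Polynomial F)) = MvPolynomial.C (T (m : ℤ)) := fun m => by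
      rw [ιalg_apply, MvPolynomial.map_C, Polynomial.toLaurent_X_pow]
    rw [map_add, map_mul, map_mul, hC, hC, hfp, hfq]
    push_cast
    rw [T_add, MvPolynomial.C_mul]
    ring
  | mul_X p i hp =>
    obtain ⟨n, f, hf⟩ := hp
    refine ⟨n, f * X i, ?_⟩
    rw [map_mul, hf, show ιalg (X i : MvPolynomial (Fin 3) (Polynomial F)) = X i from by
      rw [ιalg_apply, MvPolynomial.map_X]]
    ring

set_option maxHeartbeats 1000000 in
lemma ιalg_C_X_pow (m : ℕ) :
    ιalg (MvPolynomial.C (Polynomial.X ^ m) : MvPolynomial (Fin 3) (Polynomial F))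
      = MvPolynomial.C (T (m : ℤ)) := by
  rw [ιalg_apply, MvPolynomial.map_C, Polynomial.toLaurent_X_pow]

lemma phi_exists {r : MvPolynomial (Fin 3) F} (hr : r ∈ toricS F) :
    ∃ q, ιalg q = φ r := by
  obtain ⟨q, hq⟩ := phi_mem_range_of_mem hr
  exact ⟨q, hq⟩

noncomputable def χfun (r : toricS F) : MvPolynomial (Fin 3) (Polynomial F) :=
  (phi_exists r.2).choose

lemma χ_spec (r : toricS F) : ιalg (χfun r) = φ (r : MvPolynomial (Fin 3) F) :=
  (phi_exists r.2).choose_spec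

set_option maxHeartbeats 1000000 in
noncomputable def χ : toricS F →+* MvPolynomial (Fin 3) (Polynomial F) where
  toFun := χfun
  map_one' := ιalg_injective <| by
    rw [χ_spec, OneMemClass.coe_one, map_one, map_one]
  map_mul' x y := ιalg_injective <| by
    rw [map_mul, χ_spec, χ_spec, χ_spec, MulMemClass.coe_mul, map_mul]
  map_zero' := ιalg_injective <| by
    rw [χ_spec, ZeroMemClass.coe_zero, map_zero, map_zero]
  map_add' x y := ιalg_injective <| by
    rw [map_add, χ_spec, χ_spec, χ_spec, AddMemClass.coe_add, map_add]

end ToricAux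

open ToricAux LaurentPolynomial

set_option synthInstance.maxHeartbeats 1000000 in
set_option maxHeartbeats 2000000 in
/-- The ring `𝒮 = F[x, xz, xz², y, yz, yz²]` is a normal integral domain: it is a domain and
it is integrally closed in its field of fractions. -/
theorem toricS_isDomain_and_integrallyClosed (ℓ : ℕ) (hℓ : ℓ.Prime) (hℓ2 : 2 < ℓ)
    (F : Type*) [Field F] [Fintype F] [CharP F ℓ] :
    IsDomain (toricS F) ∧ IsIntegrallyClosed (toricS F) := by
  classical
  refine ⟨inferInstance, ?_⟩
  haveI : IsDomain (LaurentPolynomial F) := NoZeroDivisors.to_isDomain _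
  -- Notation
  set A := MvPolynomial (Fin 3) F with hAdef
  -- `K := FractionRing A` is a fraction field of `toricS F`
  haveI hFR : IsFractionRing (toricS F) (FractionRing A) := by
    constructor
    constructor
    · -- map_units'
      intro y
      have hy0 : (y : toricS F) ≠ 0 := nonZeroDivisors.ne_zero y.2
      have hyA : ((y : toricS F) : A) ≠ 0 := by
        intro h
        exact hy0 (Subtype.ext h)
      rw [show algebraMap (toricS F) (FractionRing A) y
          = algebraMap A (FractionRing A) ((y : toricS F) : A) from rfl]
      exact isUnit_iff_ne_zero.mpr fun h => hyA <|
        IsFractionRing.injective A (FractionRing A) (by rw [h, map_zero])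
    · -- surj'
      intro z
      obtain ⟨⟨num, den⟩, hz⟩ := IsLocalization.surj (nonZeroDivisors A) z
      set N := max num.totalDegree (den : A).totalDegree with hN
      set m : A := (X 0 * X 1) ^ N with hm
      have hm0 : m ≠ 0 := pow_ne_zero _ (mul_ne_zero (X_ne_zero _) (X_ne_zero _))
      have hr : num * m ∈ toricS F := mul_shift_mem num N (le_max_left _ _)
      have hs : (den : A) * m ∈ toricS F := mul_shift_mem _ N (le_max_right _ _)
      have hden0 : (den : A) ≠ 0 := nonZeroDivisors.ne_zero den.2
      refine ⟨⟨⟨num * m, hr⟩, ⟨⟨(den : A) * m, hs⟩,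
        mem_nonZeroDivisors_of_ne_zero fun h0 => ?_⟩⟩, ?_⟩
      · exact mul_ne_zero hden0 hm0 (Subtype.ext_iff.mp h0)
      · show z * algebraMap A (FractionRing A) ((den : A) * m)
          = algebraMap A (FractionRing A) (num * m)
        rw [map_mul, map_mul, ← mul_assoc, hz]
    · -- exists_of_eq
      intro x y h
      refine ⟨1, ?_⟩
      have : ((x : toricS F) : A) = ((y : toricS F) : A) :=
        IsFractionRing.injective A (FractionRing A) h
      rw [Subtype.ext this]
  rw [isIntegrallyClosed_iff (FractionRing A)]
  intro x hx
  -- step 1 : x comes from some a : A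
  have hxA : IsIntegral A x := IsIntegral.tower_top (A := A) hx
  obtain ⟨a, ha⟩ := IsIntegrallyClosed.isIntegral_iff.mp hxA
  -- step 2 : a is integral over toricS F
  have haR : IsIntegral (toricS F) a := by
    rw [← isIntegral_algebraMap_iff (B := FractionRing A)
      (IsFractionRing.injective A (FractionRing A))]
    rw [ha]
    exact hx
  -- step 3 : pass to MvPolynomial (Fin 3) (LaurentPolynomial F) =: B and its fraction field
  letI : Algebra (MvPolynomial (Fin 3) (Polynomial F))
      (MvPolynomial (Fin 3) (LaurentPolynomial F)) := (ιalg (F := F)).toRingHom.toAlgebra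
  letI : Algebra (toricS F) (MvPolynomial (Fin 3) (LaurentPolynomial F)) :=
    ((φ (F := F)).toRingHom.comp (algebraMap (toricS F) A)).toAlgebra
  letI : Algebra (toricS F) (MvPolynomial (Fin 3) (Polynomial F)) := (χ (F := F)).toAlgebra
  set B := MvPolynomial (Fin 3) (LaurentPolynomial F) with hBdef
  set P := MvPolynomial (Fin 3) (Polynomial F) with hPdef
  have halgPL : ∀ p : P, algebraMap P (FractionRing B) p
      = algebraMap B (FractionRing B) (ιalg p) := fun p => by
    rw [IsScalarTower.algebraMap_apply P B (FractionRing B)]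
    rfl
  have halgRL : ∀ r : toricS F, algebraMap (toricS F) (FractionRing B) r
      = algebraMap B (FractionRing B) (φ (r : A)) := fun r => by
    rw [IsScalarTower.algebraMap_apply (toricS F) B (FractionRing B)]
    rfl
  haveI : IsScalarTower (toricS F) P B :=
    IsScalarTower.of_algebraMap_eq fun r => (χ_spec r).symm
  haveI : IsScalarTower (toricS F) P (FractionRing B) := inferInstance
  -- the element of the big fraction field
  have hxL : IsIntegral (toricS F) (algebraMap B (FractionRing B) (φ a)) := by
    have h := haR.map_of_comp_eq (RingHom.id (toricS F))
      ((algebraMap B (FractionRing B)).comp (φ (F := F)).toRingHom) ?_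
    · exact h
    · ext r
      simp only [RingHom.comp_apply, RingHom.id_apply]
      rw [halgRL]
      rfl
  have hxP : IsIntegral P (algebraMap B (FractionRing B) (φ a)) := hxL.tower_top
  -- P is integrally closed with fraction field FractionRing B
  haveI hFRPL : IsFractionRing P (FractionRing B) := by
    constructor
    constructor
    · intro y
      have hy0 : (y : P) ≠ 0 := nonZeroDivisors.ne_zero y.2
      have hyB : ιalg (y : P) ≠ 0 := fun h => hy0 (ιalg_injective (by rw [h, map_zero]))
      rw [halgPL]
      exact isUnit_iff_ne_zero.mpr fun h => hyB <|
        IsFractionRing.injective B (FractionRing B) (by rw [h, map_zero])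
    · intro z
      obtain ⟨⟨bn, bd⟩, hb⟩ := IsLocalization.surj (nonZeroDivisors B) z
      obtain ⟨n1, p1, hp1⟩ := exists_shift bn
      obtain ⟨n2, p2, hp2⟩ := exists_shift (bd : B)
      have hCT : ∀ k : ℕ, (MvPolynomial.C (T (k : ℤ)) : B) ≠ 0 := fun k h =>
        (isUnit_T (R := F) (k : ℤ)).ne_zero
          (MvPolynomial.C_injective (Fin 3) (LaurentPolynomial F)
            (by rw [h, MvPolynomial.C_0]))
      have hbd0 : (bd : B) ≠ 0 := nonZeroDivisors.ne_zero bd.2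
      have hr' : ιalg (p1 * MvPolynomial.C (Polynomial.X ^ n2))
          = bn * MvPolynomial.C (T (n1 : ℤ)) * MvPolynomial.C (T (n2 : ℤ)) := by
        rw [map_mul, hp1, ιalg_C_X_pow]
      have hs' : ιalg (p2 * MvPolynomial.C (Polynomial.X ^ n1))
          = (bd : B) * MvPolynomial.C (T (n2 : ℤ)) * MvPolynomial.C (T (n1 : ℤ)) := by
        rw [map_mul, hp2, ιalg_C_X_pow]
      refine ⟨⟨p1 * MvPolynomial.C (Polynomial.X ^ n2),
        ⟨p2 * MvPolynomial.C (Polynomial.X ^ n1),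
          mem_nonZeroDivisors_of_ne_zero fun h0 => ?_⟩⟩, ?_⟩
      · have : ιalg (p2 * MvPolynomial.C (Polynomial.X ^ n1)) = 0 := by rw [h0, map_zero]
        rw [hs'] at this
        exact (mul_ne_zero (mul_ne_zero hbd0 (hCT n2)) (hCT n1)) this
      · show z * algebraMap P (FractionRing B) _ = algebraMap P (FractionRing B) _
        rw [halgPL, halgPL, hr', hs']
        simp only [map_mul]
        rw [show z * (algebraMap B (FractionRing B) (bd : B)
            * algebraMap B (FractionRing B) (MvPolynomial.C (T (n2 : ℤ)))
            * algebraMap B (FractionRing B) (MvPolynomial.C (T (n1 : ℤ))))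
          = (z * algebraMap B (FractionRing B) (bd : B))
            * algebraMap B (FractionRing B) (MvPolynomial.C (T (n2 : ℤ)))
            * algebraMap B (FractionRing B) (MvPolynomial.C (T (n1 : ℤ))) from by ring, hb]
        ring
    · intro x y h
      refine ⟨1, ?_⟩
      rw [halgPL, halgPL] at h
      have := ιalg_injective (IsFractionRing.injective B (FractionRing B) h)
      rw [this]
  obtain ⟨p, hp⟩ := IsIntegrallyClosed.isIntegral_iff.mp hxP
  have hpφ : ιalg p = φ a := by
    apply IsFractionRing.injective B (FractionRing B)
    rw [← halgPL]
    exact hp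
  refine ⟨⟨a, mem_of_phi_eq hpφ⟩, ?_⟩
  exact ha
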